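/- arXiv:0801.4597 — 2 statements merged into one kernel-verified Lean document; each statement's English description precedes it below -/
import Mathlib

section
/- Let A be an n×n integer matrix and B an m×m integer matrix, and let Aᵗ, Bᵗ denote their transposes. The assignment v ⊗ w ↦ v⊠w induces a well-defined injective ℤ-linear map from ker(1_n − Aᵗ : ℤ^n → ℤ^n) ⊗_ℤ ker(1_m − Bᵗ : ℤ^m → ℤ^m) into ker(1_{nm} − (A⊠B)ᵗ : ℤ^{nm} → ℤ^{nm}). -/
open Matrix
open scoped Kronecker TensorProduct
set_option synthInstance.maxHeartbeats 1000000
set_option maxHeartbeats 1000000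

section Aux

variable {n m : ℕ}

/-- bilinear kron map -/
noncomputable def kronBil (n m : ℕ) :
    (Fin n → ℤ) →ₗ[ℤ] (Fin m → ℤ) →ₗ[ℤ] (Fin n × Fin m → ℤ) :=
  LinearMap.mk₂ ℤ (fun v w p => v p.1 * w p.2)
    (by intros; funext p; dsimp; ring)
    (by intros; funext p; dsimp; ring)
    (by intros; funext p; dsimp; ring)
    (by intros; funext p; dsimp; ring)

noncomputable def kronLift (n m : ℕ) :=
  TensorProduct.lift (kronBil n m)

lemma kronLift_eq :
    kronLift n m = ((Module.Basis.tensorProduct (Pi.basisFun ℤ (Fin n))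
      (Pi.basisFun ℤ (Fin m))).equiv (Pi.basisFun ℤ (Fin n × Fin m))
      (Equiv.refl _)).toLinearMap := by
  apply (Module.Basis.tensorProduct (Pi.basisFun ℤ (Fin n)) (Pi.basisFun ℤ (Fin m))).ext
  rintro ⟨i, j⟩
  rw [LinearEquiv.coe_coe, Module.Basis.equiv_apply, Equiv.refl_apply, Module.Basis.tensorProduct_apply]
  funext p
  simp only [kronLift, TensorProduct.lift.tmul, kronBil, LinearMap.mk₂_apply,
    Pi.basisFun_apply]
  rcases p with ⟨a, b⟩
  simp [Pi.single_apply, Prod.ext_iff, ite_and]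
  split_ifs <;> simp_all

lemma kronLift_injective : Function.Injective (kronLift n m) := by
  rw [kronLift_eq]; exact (LinearEquiv.injective _)

end Aux

/-- The assignment `v ⊗ w ↦ v ⊠ w` (with `(v ⊠ w) (i,j) = v i * w j`, indexing `ℤ^{nm}`
by pairs) induces a well-defined injective `ℤ`-linear map from
`ker(1 - Aᵗ : ℤ^n → ℤ^n) ⊗ ker(1 - Bᵗ : ℤ^m → ℤ^m)` into
`ker(1 - (A ⊠ B)ᵗ : ℤ^{nm} → ℤ^{nm})`. -/
theorem kernel_tensor_embeds_kernel_kronecker {n m : ℕ}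
    (A : Matrix (Fin n) (Fin n) ℤ) (B : Matrix (Fin m) (Fin m) ℤ) :
    ∃ g : (LinearMap.ker (1 - Aᵀ).mulVecLin ⊗[ℤ] LinearMap.ker (1 - Bᵀ).mulVecLin) →ₗ[ℤ]
        LinearMap.ker (1 - (A ⊗ₖ B)ᵀ).mulVecLin,
      Function.Injective g ∧
      ∀ (v : LinearMap.ker (1 - Aᵀ).mulVecLin) (w : LinearMap.ker (1 - Bᵀ).mulVecLin),
        (g (v ⊗ₜ[ℤ] w) : Fin n × Fin m → ℤ) =
          fun p : Fin n × Fin m => (v : Fin n → ℤ) p.1 * (w : Fin m → ℤ) p.2 := by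
  set KA := LinearMap.ker (1 - Aᵀ).mulVecLin
  set KB := LinearMap.ker (1 - Bᵀ).mulVecLin
  -- inclusion of tensor products
  have hincl : Function.Injective (TensorProduct.map KA.subtype KB.subtype) := by
    rw [← LinearMap.rTensor_comp_lTensor, LinearMap.coe_comp]
    exact (Module.Flat.rTensor_preserves_injective_linearMap _
      (Submodule.injective_subtype KA)).comp
      (Module.Flat.lTensor_preserves_injective_linearMap _
        (Submodule.injective_subtype KB))
  set F := (kronLift n m).comp (TensorProduct.map KA.subtype KB.subtype) with hF
  -- fixed point facts
  have hAfix : ∀ v : KA, Aᵀ *ᵥ (v : Fin n → ℤ) = (v : Fin n → ℤ) := by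
    intro v
    have := v.2
    simp only [KA, LinearMap.mem_ker, Matrix.mulVecLin_apply, Matrix.sub_mulVec,
      Matrix.one_mulVec, sub_eq_zero] at this
    exact this.symm
  have hBfix : ∀ w : KB, Bᵀ *ᵥ (w : Fin m → ℤ) = (w : Fin m → ℤ) := by
    intro w
    have := w.2
    simp only [KB, LinearMap.mem_ker, Matrix.mulVecLin_apply, Matrix.sub_mulVec,
      Matrix.one_mulVec, sub_eq_zero] at this
    exact this.symm
  -- kron fixed point
  have hmem : ∀ x, F x ∈ LinearMap.ker (1 - (A ⊗ₖ B)ᵀ).mulVecLin := by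
    have key : (1 - (A ⊗ₖ B)ᵀ).mulVecLin.comp F = 0 := by
      apply TensorProduct.ext'
      intro v w
      simp only [LinearMap.comp_apply, hF, TensorProduct.map_tmul,
        Submodule.coe_subtype, LinearMap.zero_apply]
      have hk : kronLift n m ((v : Fin n → ℤ) ⊗ₜ[ℤ] (w : Fin m → ℤ)) =
          fun p : Fin n × Fin m => (v : Fin n → ℤ) p.1 * (w : Fin m → ℤ) p.2 := by
        simp [kronLift, kronBil]
      rw [hk]
      have : (A ⊗ₖ B)ᵀ *ᵥ (fun p : Fin n × Fin m => (v : Fin n → ℤ) p.1 * (w : Fin m → ℤ) p.2)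
          = fun p : Fin n × Fin m => (v : Fin n → ℤ) p.1 * (w : Fin m → ℤ) p.2 := by
        funext p
        rcases p with ⟨i, j⟩
        have hv := congrFun (hAfix v) i
        have hw := congrFun (hBfix w) j
        simp only [Matrix.mulVec, dotProduct] at hv hw ⊢
        calc ∑ q : Fin n × Fin m, (A ⊗ₖ B)ᵀ (i, j) q * ((v : Fin n → ℤ) q.1 * (w : Fin m → ℤ) q.2)
            = ∑ a : Fin n, ∑ b : Fin m, (Aᵀ i a * (v : Fin n → ℤ) a) * (Bᵀ j b * (w : Fin m → ℤ) b) := by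
              rw [Fintype.sum_prod_type]
              refine Finset.sum_congr rfl fun a _ => Finset.sum_congr rfl fun b _ => ?_
              simp [Matrix.kroneckerMap_apply, Matrix.transpose_apply]
              ring
          _ = (∑ a : Fin n, Aᵀ i a * (v : Fin n → ℤ) a) * (∑ b : Fin m, Bᵀ j b * (w : Fin m → ℤ) b) := by
              rw [Finset.sum_mul_sum]
          _ = (v : Fin n → ℤ) i * (w : Fin m → ℤ) j := by rw [hv, hw]
      rw [Matrix.mulVecLin_apply, Matrix.sub_mulVec, Matrix.one_mulVec, this, sub_self]
    intro x
    have := congrFun (congrArg DFunLike.coe key) x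
    simpa [LinearMap.mem_ker] using this
  refine ⟨F.codRestrict _ hmem, ?_, ?_⟩
  · intro x y h
    apply kronLift_injective.comp hincl
    have := congrArg (Subtype.val) h
    exact this
  · intro v w
    show (F (v ⊗ₜ w) : Fin n × Fin m → ℤ) = _
    simp [hF, kronLift, kronBil]
end

section
/- Let A and A' be n×n nondegenerate 0-1 matrices and B and B' be m×m nondegenerate 0-1 matrices. If A⊠B = A'⊠B', then A = A' and B = B'. -/
open Matrix
open scoped Kronecker

/-- A 0-1 matrix: every entry is `0` or `1`. -/
def IsZeroOneMatrix {N : Type*} (A : Matrix N N ℂ) : Prop :=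
  ∀ i j : N, A i j = 0 ∨ A i j = 1

/-- A matrix is nondegenerate if no row and no column is identically zero. -/
def IsNondegenerate {N : Type*} (A : Matrix N N ℂ) : Prop :=
  (∀ i, ∃ j, A i j ≠ 0) ∧ (∀ j, ∃ i, A i j ≠ 0)

/-- For nondegenerate 0-1 matrices, the Kronecker product is cancellative:
if `A ⊠ B = A' ⊠ B'` (with `A, A'` of size `n ≥ 1` and `B, B'` of size `m ≥ 1`),
then `A = A'` and `B = B'`. -/
theorem kronecker_cancellation {n m : ℕ} (hn : 1 ≤ n) (hm : 1 ≤ m)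
    (A A' : Matrix (Fin n) (Fin n) ℂ) (B B' : Matrix (Fin m) (Fin m) ℂ)
    (hA01 : IsZeroOneMatrix A) (hAnd : IsNondegenerate A)
    (hA'01 : IsZeroOneMatrix A') (hA'nd : IsNondegenerate A')
    (hB01 : IsZeroOneMatrix B) (hBnd : IsNondegenerate B)
    (hB'01 : IsZeroOneMatrix B') (hB'nd : IsNondegenerate B')
    (h : A ⊗ₖ B = A' ⊗ₖ B') : A = A' ∧ B = B' := by
  have key : ∀ i i' j j', A i i' * B j j' = A' i i' * B' j j' := by
    intro i i' j j'
    have := congrFun (congrFun h (i, j)) (i', j')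
    simpa [Matrix.kroneckerMap_apply] using this
  have hAA : A = A' := by
    ext i i'
    rcases hA01 i i' with h0 | h1
    · rcases hA'01 i i' with h0' | h1'
      · rw [h0, h0']
      · obtain ⟨j', hj'⟩ := hB'nd.1 ⟨0, hm⟩
        exfalso
        have := key i i' ⟨0, hm⟩ j'
        rw [h0, h1'] at this
        simp at this
        exact hj' this.symm
    · rcases hA'01 i i' with h0' | h1'
      · obtain ⟨j', hj'⟩ := hBnd.1 ⟨0, hm⟩
        exfalso
        have := key i i' ⟨0, hm⟩ j'
        rw [h1, h0'] at this
        simp at this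
        exact hj' this
      · rw [h1, h1']
  refine ⟨hAA, ?_⟩
  ext j j'
  obtain ⟨i', hi'⟩ := hAnd.1 ⟨0, hn⟩
  have h1 : A ⟨0, hn⟩ i' = 1 := (hA01 ⟨0, hn⟩ i').resolve_left hi'
  have := key ⟨0, hn⟩ i' j j'
  rw [h1, ← hAA, h1] at this
  simpa using this
end
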